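/- Let V₀, V₁, U* ∈ S++^n, K_i = V_i ⊗ U*, and let γ_{A→B}(t) = ((1−t)I + tT_{A→B}) A ((1−t)I + tT_{A→B}) with T_{A→B} = A^{−1/2}(A^{1/2}BA^{1/2})^{1/2}A^{−1/2} denote the Bures geodesic. Then γ_{K₀→K₁}(t) = γ_{V₀→V₁}(t) ⊗ U* for all t ∈ [0,1]. -/

import Mathlib

open Matrix Kronecker

/-- The positive semidefinite square root of a positive semidefinite matrix,
extended by `0` to all matrices.  On symmetric positive definite matrices this
is the unique symmetric positive definite square root. -/
noncomputable def matSqrt {m : Type*} [Fintype m] [DecidableEq m]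
    (A : Matrix m m ℝ) : Matrix m m ℝ :=
  open scoped Classical in
  if h : A.PosSemidef then
    (h.1.eigenvectorUnitary : Matrix m m ℝ) * diagonal (fun i => Real.sqrt (h.1.eigenvalues i)) *
      (star h.1.eigenvectorUnitary : Matrix m m ℝ) else 0

/-- The Bures geodesic `γ_{A→B}(t) = ((1−t)I + tT) A ((1−t)I + tT)` with
`T = A^{−1/2}(A^{1/2}BA^{1/2})^{1/2}A^{−1/2}`. -/
noncomputable def buresGeodesic {m : Type*} [Fintype m] [DecidableEq m]
    (A B : Matrix m m ℝ) (t : ℝ) : Matrix m m ℝ :=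
  ((1 - t) • (1 : Matrix m m ℝ)
      + t • ((matSqrt A)⁻¹ * matSqrt (matSqrt A * B * matSqrt A) * (matSqrt A)⁻¹))
    * A *
  ((1 - t) • (1 : Matrix m m ℝ)
      + t • ((matSqrt A)⁻¹ * matSqrt (matSqrt A * B * matSqrt A) * (matSqrt A)⁻¹))

section helpers

variable {m p : Type*} [Fintype m] [DecidableEq m] [Fintype p] [DecidableEq p]

open scoped MatrixOrder

lemma matSqrt_of_posSemidef {A : Matrix m m ℝ} (hA : A.PosSemidef) :
    matSqrt A = CFC.sqrt A := by
  rw [matSqrt, dif_pos hA, CFC.sqrt_eq_cfc, cfc_nnreal_eq_real _ A, hA.1.cfc_eq]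
  simp only [IsHermitian.cfc, Unitary.conjStarAlgAut_apply, Real.coe_sqrt, Real.coe_toNNReal']
  congr 3
  ext i
  simp [max_eq_left (hA.eigenvalues_nonneg i)]

lemma matSqrt_posSemidef {A : Matrix m m ℝ} (hA : A.PosSemidef) :
    (matSqrt A).PosSemidef := by
  rw [matSqrt_of_posSemidef hA]; exact nonneg_iff_posSemidef.mp (CFC.sqrt_nonneg A)

lemma matSqrt_mul_self {A : Matrix m m ℝ} (hA : A.PosSemidef) :
    matSqrt A * matSqrt A = A := by
  rw [matSqrt_of_posSemidef hA]; exact CFC.sqrt_mul_sqrt_self A (nonneg_iff_posSemidef.mpr hA)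

lemma matSqrt_unique {A B : Matrix m m ℝ} (hB : B.PosSemidef) (h : B * B = A) :
    matSqrt A = B := by
  have hA : A.PosSemidef := by
    rw [← h]; nth_rewrite 1 [← hB.isHermitian.eq]
    exact posSemidef_conjTranspose_mul_self B
  rw [matSqrt_of_posSemidef hA]
  exact CFC.sqrt_unique h (nonneg_iff_posSemidef.mpr hB)

lemma conjTranspose_kronecker (A : Matrix m m ℝ) (B : Matrix p p ℝ) :
    (A ⊗ₖ B)ᴴ = Aᴴ ⊗ₖ Bᴴ := by
  ext i j
  simp [conjTranspose_apply, kroneckerMap_apply]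

lemma posSemidef_kronecker {A : Matrix m m ℝ} {B : Matrix p p ℝ}
    (hA : A.PosSemidef) (hB : B.PosSemidef) : (A ⊗ₖ B).PosSemidef := by
  obtain ⟨C, rfl⟩ : ∃ C : Matrix m m ℝ, A = Cᴴ * C :=
    CStarAlgebra.nonneg_iff_eq_star_mul_self.mp hA.nonneg
  obtain ⟨D, rfl⟩ : ∃ D : Matrix p p ℝ, B = Dᴴ * D :=
    CStarAlgebra.nonneg_iff_eq_star_mul_self.mp hB.nonneg
  rw [mul_kronecker_mul, ← _root_.conjTranspose_kronecker]
  exact posSemidef_conjTranspose_mul_self _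

lemma matSqrt_kronecker {A : Matrix m m ℝ} {B : Matrix p p ℝ}
    (hA : A.PosSemidef) (hB : B.PosSemidef) :
    matSqrt (A ⊗ₖ B) = matSqrt A ⊗ₖ matSqrt B :=
  matSqrt_unique (posSemidef_kronecker (matSqrt_posSemidef hA) (matSqrt_posSemidef hB))
    (by rw [← mul_kronecker_mul, matSqrt_mul_self hA, matSqrt_mul_self hB])

lemma matSqrt_det_isUnit {U : Matrix m m ℝ} (hU : U.PosDef) :
    IsUnit (matSqrt U).det := by
  have h : (matSqrt U).det * (matSqrt U).det = U.det := by
    rw [← det_mul, matSqrt_mul_self hU.posSemidef]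
  have hd := hU.det_pos
  refine isUnit_iff_ne_zero.mpr fun h0 => ?_
  rw [h0, mul_zero] at h
  exact absurd (h ▸ hd) (lt_irrefl _)

end helpers

/-- The factor leaf `{V ⊗ U*}` is geodesically closed: the ambient Bures
geodesic between `V₀ ⊗ U*` and `V₁ ⊗ U*` is the factor geodesic tensored
with `U*`. -/
theorem bures_geodesic_factor_leaf {n : ℕ}
    (V₀ V₁ Ustar : Matrix (Fin n) (Fin n) ℝ)
    (hV₀ : V₀.PosDef) (hV₁ : V₁.PosDef) (hU : Ustar.PosDef)
    (t : ℝ) (ht : t ∈ Set.Icc (0 : ℝ) 1) :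
    buresGeodesic (V₀ ⊗ₖ Ustar) (V₁ ⊗ₖ Ustar) t
      = (buresGeodesic V₀ V₁ t) ⊗ₖ Ustar := by
  set sV := matSqrt V₀ with hsV
  set sU := matSqrt Ustar with hsU
  have hsq : matSqrt (V₀ ⊗ₖ Ustar) = sV ⊗ₖ sU :=
    matSqrt_kronecker hV₀.posSemidef hU.posSemidef
  have hUU : sU * sU = Ustar := matSqrt_mul_self hU.posSemidef
  have hsVh : sVᴴ = sV := (matSqrt_posSemidef hV₀.posSemidef).isHermitian.eq
  have hsUh : sUᴴ = sU := (matSqrt_posSemidef hU.posSemidef).isHermitian.eq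
  -- middle matrix factorizes
  have hmid : (sV * V₁ * sV) ⊗ₖ (sU * Ustar * sU)
      = (sV ⊗ₖ sU) * (V₁ ⊗ₖ Ustar) * (sV ⊗ₖ sU) := by
    rw [mul_kronecker_mul, mul_kronecker_mul]
  have hmidV : (sV * V₁ * sV).PosSemidef := by
    have := hV₁.posSemidef.mul_mul_conjTranspose_same sV
    rwa [hsVh] at this
  have hmidU : matSqrt (sU * Ustar * sU) = Ustar := by
    refine matSqrt_unique hU.posSemidef ?_
    rw [← hUU]; simp only [mul_assoc]
  have hsqmid : matSqrt ((sV ⊗ₖ sU) * (V₁ ⊗ₖ Ustar) * (sV ⊗ₖ sU))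
      = matSqrt (sV * V₁ * sV) ⊗ₖ Ustar := by
    rw [← hmid, matSqrt_kronecker hmidV, hmidU]
    have := hU.posSemidef.mul_mul_conjTranspose_same sU
    rwa [hsUh] at this
  have hUinv : sU⁻¹ * Ustar * sU⁻¹ = 1 := by
    rw [← hUU, ← mul_assoc, mul_assoc (sU⁻¹ * sU),
      nonsing_inv_mul _ (matSqrt_det_isUnit hU),
      mul_nonsing_inv _ (matSqrt_det_isUnit hU), one_mul]
  have hT : (matSqrt (V₀ ⊗ₖ Ustar))⁻¹
        * matSqrt (matSqrt (V₀ ⊗ₖ Ustar) * (V₁ ⊗ₖ Ustar) * matSqrt (V₀ ⊗ₖ Ustar))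
        * (matSqrt (V₀ ⊗ₖ Ustar))⁻¹
      = (sV⁻¹ * matSqrt (sV * V₁ * sV) * sV⁻¹) ⊗ₖ (1 : Matrix (Fin n) (Fin n) ℝ) := by
    rw [hsq, hsqmid, inv_kronecker, ← mul_kronecker_mul, ← mul_kronecker_mul, hUinv]
  rw [buresGeodesic, buresGeodesic, hT]
  rw [show (1 : Matrix (Fin n × Fin n) (Fin n × Fin n) ℝ)
      = (1 : Matrix (Fin n) (Fin n) ℝ) ⊗ₖ (1 : Matrix (Fin n) (Fin n) ℝ) from
      (one_kronecker_one).symm]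
  rw [← smul_kronecker, ← smul_kronecker, ← add_kronecker,
    ← mul_kronecker_mul, ← mul_kronecker_mul]
  congr 1
  simp
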